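/- arXiv:1310.7379 — 5 statements merged into one kernel-verified Lean document; each statement's English description precedes it below -/
import Mathlib

section
/- Let (W,S) be a Coxeter system with length function ℓ and Bruhat order ≤. Let x, y ∈ W and s, t ∈ S be such that y = s·x·t and ℓ(x) = ℓ(y). Then for every x' ∈ W with x' ≤ x, either x' ≤ y, or both s·x'·t ≤ y and ℓ(s·x'·t) ≤ ℓ(x'). -/
/-- The Bruhat order on a Coxeter group: `x ≤ y` iff some reduced expression of `y`
contains a subword that is a reduced expression of `x`. -/
def CoxeterSystem.BruhatLE {B : Type*} {W : Type*} [Group W] {M : CoxeterMatrix B}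
    (cs : CoxeterSystem M W) (x y : W) : Prop :=
  ∃ ω : List B, cs.IsReduced ω ∧ cs.wordProd ω = y ∧
    ∃ ω' : List B, ω'.Sublist ω ∧ cs.IsReduced ω' ∧ cs.wordProd ω' = x

namespace BruhatAux

open CoxeterSystem List

variable {B : Type*} {W : Type*} [Group W] {M : CoxeterMatrix B} (cs : CoxeterSystem M W)

local prefix:100 "σ" => cs.simple
local prefix:100 "π" => cs.wordProd
local prefix:100 "ℓ" => cs.length

noncomputable local instance : DecidableEq W := Classical.decEq W

lemma mul_simple_eq_one_iff (i : B) (t : W) : t * σ i = 1 ↔ t = σ i := by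
  constructor
  · intro h
    have := eq_inv_of_mul_eq_one_left h
    simpa using this
  · intro h; rw [h, cs.simple_mul_simple_self]

lemma conj_simple_eq_simple_iff (i : B) (t : W) : σ i * t * σ i = σ i ↔ t = σ i := by
  constructor
  · intro h
    have h2 : t * σ i = 1 := by
      apply mul_left_cancel (a := σ i)
      rw [mul_one, ← mul_assoc, h]
    exact (mul_simple_eq_one_iff cs i t).mp h2
  · intro h; rw [h, cs.simple_mul_simple_self, one_mul]

/-- The generator of the parity representation. -/
noncomputable def sigmaPerm (i : B) : Equiv.Perm (W × ZMod 2) :=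
  Function.Involutive.toPerm
    (fun p => (σ i * p.1 * σ i, p.2 + if p.1 = σ i then 1 else 0))
    (by
      intro p
      have h1 : σ i * (σ i * p.1 * σ i) * σ i = p.1 := by
        rw [← mul_assoc, ← mul_assoc, cs.simple_mul_simple_self, one_mul,
          mul_assoc, cs.simple_mul_simple_self, mul_one]
      simp only [Prod.ext_iff]
      refine ⟨h1, ?_⟩
      simp only [conj_simple_eq_simple_iff cs]
      rcases eq_or_ne p.1 (σ i) with h | h
      · simp only [h, if_pos rfl]
        show p.2 + 1 + 1 = p.2
        have : (1 + 1 : ZMod 2) = 0 := by decide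
        rw [add_assoc, this, add_zero]
      · simp [h])

lemma sigmaPerm_apply (i : B) (t : W) (ε : ZMod 2) :
    sigmaPerm cs i (t, ε) = (σ i * t * σ i, ε + if t = σ i then 1 else 0) := rfl

lemma sigma_pow_apply (i j : B) (a : ℕ) (t : W) (ε : ZMod 2) :
    ((sigmaPerm cs i * sigmaPerm cs j) ^ a) (t, ε) =
      ((σ i * σ j) ^ a * t * ((σ i * σ j) ^ a)⁻¹,
        ε + ∑ k ∈ Finset.range (2 * a),
          (if (σ i * σ j) ^ k * t = σ j then (1 : ZMod 2) else 0)) := by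
  induction a generalizing t ε with
  | zero => simp
  | succ a ih =>
    rw [pow_succ, Equiv.Perm.mul_apply]
    have e1 : (σ j * t * σ j = σ i) ↔ ((σ i * σ j) * t = σ j) := by
      constructor
      · intro h
        have h' : σ i * (σ j * t * σ j) = σ i * σ i := by rw [h]
        rw [cs.simple_mul_simple_self, ← mul_assoc, ← mul_assoc] at h'
        calc σ i * σ j * t = σ i * σ j * t * σ j * σ j := by
              rw [cs.simple_mul_simple_cancel_right]
          _ = σ j := by rw [h', one_mul]
      · intro h
        have h' : σ i * (σ j * t * σ j) = σ j * σ j := by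
          rw [← mul_assoc, ← mul_assoc, h]
        rw [cs.simple_mul_simple_self] at h'
        calc σ j * t * σ j = σ i * (σ i * (σ j * t * σ j)) := by
              rw [cs.simple_mul_simple_cancel_left]
          _ = σ i := by rw [h', mul_one]
    have step : (sigmaPerm cs i * sigmaPerm cs j) (t, ε) =
        ((σ i * σ j) * t * (σ j * σ i),
          ε + ((if t = σ j then (1:ZMod 2) else 0) + (if (σ i * σ j) * t = σ j then 1 else 0))) := by
      rw [Equiv.Perm.mul_apply, sigmaPerm_apply, sigmaPerm_apply]
      simp only [Prod.ext_iff]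
      constructor
      · group
      · rw [add_assoc]
        congr 2
        simp only [e1]
    rw [step, ih]
    have hk : ∀ k : ℕ, ((σ i * σ j) ^ k * ((σ i * σ j) * t * (σ j * σ i)) = σ j)
        ↔ ((σ i * σ j) ^ (k + 1 + 1) * t = σ j) := by
      intro k
      have expand : (σ i * σ j) ^ k * ((σ i * σ j) * t * (σ j * σ i))
          = ((σ i * σ j) ^ (k+1) * t) * (σ j * σ i) := by
        rw [pow_succ]; group
      have expand2 : (σ i * σ j) ^ (k + 1 + 1) * t = (σ i * σ j) * ((σ i * σ j) ^ (k+1) * t) := by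
        rw [pow_succ']; group
      have cancel : ∀ A : W, A * (σ j * σ i) * σ i * σ j = A := by
        intro A
        simp [mul_assoc, cs.simple_mul_simple_cancel_left, cs.simple_mul_simple_self]
      rw [expand, expand2]
      constructor
      · intro h
        have h2 : (σ i * σ j) ^ (k+1) * t * (σ j * σ i) * σ i * σ j = σ j * σ i * σ j := by
          rw [h]
        rw [cancel] at h2
        rw [h2]
        simp [mul_assoc, cs.simple_mul_simple_cancel_left, cs.simple_mul_simple_self]
      · intro h
        have h2 : σ j * (σ i * (σ i * σ j * ((σ i * σ j) ^ (k+1) * t))) = σ j * (σ i * σ j) := by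
          rw [h]
        have h3 : σ j * (σ i * (σ i * σ j * ((σ i * σ j) ^ (k+1) * t)))
            = (σ i * σ j) ^ (k+1) * t := by
          simp [mul_assoc, cs.simple_mul_simple_cancel_left]
        rw [h3] at h2
        rw [h2]
        simp [mul_assoc, cs.simple_mul_simple_cancel_left, cs.simple_mul_simple_self]
    simp only [Prod.ext_iff]
    constructor
    · rw [pow_succ, mul_inv_rev]
      simp [mul_assoc, mul_inv_rev]
    · have h2m : 2 * (a + 1) = (2 * a + 1) + 1 := by ring
      rw [h2m, Finset.sum_range_succ', Finset.sum_range_succ']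
      have hsum : (∑ k ∈ Finset.range (2 * a),
            (if (σ i * σ j) ^ k * ((σ i * σ j) * t * (σ j * σ i)) = σ j then (1:ZMod 2) else 0))
          = ∑ k ∈ Finset.range (2 * a),
            (if (σ i * σ j) ^ (k + 1 + 1) * t = σ j then (1:ZMod 2) else 0) := by
        refine Finset.sum_congr rfl fun k _ => ?_
        simp only [hk k]
      rw [hsum]
      simp only [pow_zero, one_mul, pow_one, zero_add]
      abel
lemma sum_range_add' {A : Type*} [AddCommMonoid A] (f : ℕ → A) (m n : ℕ) :
    ∑ k ∈ Finset.range (m + n), f k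
      = (∑ k ∈ Finset.range m, f k) + ∑ k ∈ Finset.range n, f (m + k) := by
  induction n with
  | zero => simp
  | succ n ih =>
    rw [← Nat.add_assoc, Finset.sum_range_succ, ih, Finset.sum_range_succ, add_assoc]

lemma isLiftable_sigmaPerm : M.IsLiftable (fun i => sigmaPerm cs i) := by
  intro i j
  apply Equiv.ext
  rintro ⟨t, ε⟩
  rw [Equiv.Perm.one_apply, sigma_pow_apply, cs.simple_mul_simple_pow i j]
  have hper : ∀ k : ℕ, (σ i * σ j) ^ (M i j + k) = (σ i * σ j) ^ k := by
    intro k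
    rw [pow_add, cs.simple_mul_simple_pow i j, one_mul]
  have : (2 : ℕ) * M.M i j = M.M i j + M.M i j := by ring
  rw [this, sum_range_add' (fun k => if (σ i * σ j) ^ k * t = σ j then (1:ZMod 2) else 0)]
  simp only [hper]
  rw [CharTwo.add_self_eq_zero, add_zero]
  simp

noncomputable def phi : W →* Equiv.Perm (W × ZMod 2) :=
  cs.lift ⟨fun i => sigmaPerm cs i, isLiftable_sigmaPerm cs⟩

lemma phi_simple (i : B) : phi cs (σ i) = sigmaPerm cs i :=
  cs.lift_apply_simple (isLiftable_sigmaPerm cs) i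

lemma phi_wordProd (ω : List B) (t : W) (ε : ZMod 2) :
    phi cs (π ω) (t, ε)
      = (π ω * t * (π ω)⁻¹, ε + ((cs.rightInvSeq ω).count t : ZMod 2)) := by
  induction ω generalizing ε with
  | nil => simp [rightInvSeq]
  | cons i ω ih =>
    rw [cs.wordProd_cons, map_mul, Equiv.Perm.mul_apply, ih, phi_simple, sigmaPerm_apply]
    have hris : cs.rightInvSeq (i :: ω) = ((π ω)⁻¹ * σ i * π ω) :: cs.rightInvSeq ω := rfl
    rw [hris]
    simp only [Prod.ext_iff]
    constructor
    · simp [mul_assoc]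
    · rw [List.count_cons]
      have hiff : (π ω * t * (π ω)⁻¹ = σ i) ↔ ((π ω)⁻¹ * σ i * π ω = t) := by
        constructor
        · intro h; rw [← h]; group
        · intro h; rw [← h]; group
      push_cast
      rcases eq_or_ne ((π ω)⁻¹ * σ i * π ω) t with h | h
      · rw [if_pos (hiff.mpr h), if_pos (by simpa using h)]
        push_cast
        ring
      · rw [if_neg (fun hc => h (hiff.mp hc)), if_neg (by simpa using h)]
        push_cast
        ring

lemma count_ris_parity {ω ω' : List B} (h : π ω = π ω') (t : W) :
    ((cs.rightInvSeq ω).count t : ZMod 2) = ((cs.rightInvSeq ω').count t : ZMod 2) := by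
  have h1 := phi_wordProd cs ω t 0
  have h2 := phi_wordProd cs ω' t 0
  rw [h] at h1
  have := h1.symm.trans h2
  have := congrArg Prod.snd this
  simpa using this
lemma rightInvSeq_append (ω ω' : List B) :
    cs.rightInvSeq (ω ++ ω')
      = (cs.rightInvSeq ω).map (fun r => (π ω')⁻¹ * r * π ω') ++ cs.rightInvSeq ω' := by
  induction ω with
  | nil => simp [rightInvSeq]
  | cons i ω ih =>
    have h0 : cs.rightInvSeq (i :: (ω ++ ω'))
        = ((π (ω ++ ω'))⁻¹ * σ i * π (ω ++ ω')) :: cs.rightInvSeq (ω ++ ω') := rfl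
    have h1 : cs.rightInvSeq (i :: ω) = ((π ω)⁻¹ * σ i * π ω) :: cs.rightInvSeq ω := rfl
    show cs.rightInvSeq (i :: (ω ++ ω')) = _
    rw [h0, h1, ih, cs.wordProd_append]
    simp [mul_assoc, mul_inv_rev]

lemma leftInvSeq_eq_map_rightInvSeq (ω : List B) :
    cs.leftInvSeq ω = (cs.rightInvSeq ω).map (fun r => π ω * r * (π ω)⁻¹) := by
  induction ω with
  | nil => simp [leftInvSeq, rightInvSeq]
  | cons i ω ih =>
    show σ i :: List.map (MulAut.conj (σ i)) (cs.leftInvSeq ω) = _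
    have h0 : cs.rightInvSeq (i :: ω) = ((π ω)⁻¹ * σ i * π ω) :: cs.rightInvSeq ω := rfl
    rw [h0, ih, cs.wordProd_cons]
    simp only [List.map_cons, List.map_map, List.cons.injEq]
    constructor
    · simp [mul_assoc, mul_inv_rev, cs.simple_mul_simple_cancel_left,
        cs.simple_mul_simple_cancel_right, cs.simple_mul_simple_self]
    · apply List.map_congr_left
      intro r _
      simp [MulAut.conj, mul_assoc]

lemma count_map_eq_count (f : W → W) (l : List W) (a : W) (b : W)
    (h : ∀ x, f x = b ↔ x = a) : (l.map f).count b = l.count a := by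
  induction l with
  | nil => rfl
  | cons x l ih =>
    simp only [List.map_cons, List.count_cons, ih]
    congr 1
    by_cases hx : x = a
    · rw [if_pos (by simpa using ((h x).mpr hx)), if_pos (by simpa using hx)]
    · rw [if_neg (by simpa using fun hc => hx ((h x).mp hc)),
        if_neg (by simpa using hx)]

lemma count_ris_palindrome (γ : List B) (i : B) :
    Odd ((cs.rightInvSeq (γ ++ i :: γ.reverse)).count (π γ * σ i * (π γ)⁻¹)) := by
  set v := π γ with hv
  set t := v * σ i * v⁻¹ with ht
  have hb : cs.rightInvSeq (i :: γ.reverse)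
      = ((π γ.reverse)⁻¹ * σ i * π γ.reverse) :: cs.rightInvSeq γ.reverse := rfl
  have hrev : π γ.reverse = v⁻¹ := by rw [cs.wordProd_reverse]
  rw [rightInvSeq_append cs]
  rw [List.count_append]
  have hπb : π (i :: γ.reverse) = σ i * v⁻¹ := by rw [cs.wordProd_cons, hrev]
  have hc1 : ((cs.rightInvSeq γ).map
        (fun r => (π (i :: γ.reverse))⁻¹ * r * π (i :: γ.reverse))).count t
      = (cs.rightInvSeq γ).count (σ i) := by
    apply count_map_eq_count
    intro x
    rw [hπb]
    constructor
    · intro h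
      have h2 : σ i * v⁻¹ * (((σ i * v⁻¹)⁻¹ * x * (σ i * v⁻¹))) * (σ i * v⁻¹)⁻¹
          = σ i * v⁻¹ * t * (σ i * v⁻¹)⁻¹ := by rw [h]
      have h3 : σ i * v⁻¹ * t * (σ i * v⁻¹)⁻¹ = σ i := by
        rw [ht]; simp [mul_assoc, cs.simple_mul_simple_cancel_left]
      rw [h3] at h2
      rw [← h2]; group
    · intro h
      rw [h, ht]
      simp [mul_assoc, mul_inv_rev, cs.simple_mul_simple_cancel_left,
        cs.simple_mul_simple_cancel_right]
  rw [hc1, hb]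
  simp only [List.count_cons, beq_iff_eq]
  have hmid : ((π γ.reverse)⁻¹ * σ i * π γ.reverse) = t := by
    rw [hrev, ht]; group
  rw [if_pos hmid]
  have hc2 : (cs.rightInvSeq γ.reverse).count t = (cs.rightInvSeq γ).count (σ i) := by
    rw [cs.rightInvSeq_reverse, List.count_reverse, leftInvSeq_eq_map_rightInvSeq cs]
    apply count_map_eq_count
    intro x
    rw [← hv, ht]
    constructor
    · intro h
      have := congrArg (fun z => v⁻¹ * z * v) h
      simpa [mul_assoc] using this
    · intro h; rw [h]
  rw [hc2]
  exact ⟨(cs.rightInvSeq γ).count (σ i), by ring⟩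

lemma mem_rightInvSeq_of_isRightInversion {ω : List B} (hω : cs.IsReduced ω) {t : W}
    (ht : cs.IsRightInversion (π ω) t) : t ∈ cs.rightInvSeq ω := by
  obtain ⟨htr, hlt⟩ := ht
  obtain ⟨u, i, htu⟩ := id htr
  obtain ⟨γ, hγ⟩ := cs.wordProd_surjective u
  obtain ⟨α, hαred, hα⟩ := cs.exists_reduced_word' (π ω * t)
  have hβ : π (γ ++ i :: γ.reverse) = t := by
    rw [cs.wordProd_append, cs.wordProd_cons, cs.wordProd_reverse, hγ, htu, mul_assoc]
  have htt : t * t = 1 := htr.mul_self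
  have hπζ : π (α ++ (γ ++ i :: γ.reverse)) = π ω := by
    rw [cs.wordProd_append, hβ, ← hα, mul_assoc, htt, mul_one]
  -- t does not occur in ris α
  have hnot : (cs.rightInvSeq α).count t = 0 := by
    rw [List.count_eq_zero]
    intro hmem
    have := cs.isRightInversion_of_mem_rightInvSeq hαred hmem
    rw [← hα] at this
    obtain ⟨-, hlt2⟩ := this
    rw [mul_assoc, htt, mul_one] at hlt2
    omega
  have hcnt : ((cs.rightInvSeq (α ++ (γ ++ i :: γ.reverse))).count t)
      = (cs.rightInvSeq α).count t
        + (cs.rightInvSeq (γ ++ i :: γ.reverse)).count t := by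
    rw [rightInvSeq_append cs, List.count_append]
    congr 1
    apply count_map_eq_count
    intro x
    rw [hβ]
    constructor
    · intro h
      have := congrArg (fun z => t * z * t⁻¹) h
      rw [show t * (t⁻¹ * x * t) * t⁻¹ = x by group] at this
      rw [this, show t * t * t⁻¹ = t by group]
    · intro h; rw [h]; group
  have hodd : Odd ((cs.rightInvSeq (α ++ (γ ++ i :: γ.reverse))).count t) := by
    rw [hcnt, hnot, zero_add]
    have := count_ris_palindrome cs γ i
    rwa [hγ, ← htu] at this
  have hpar := count_ris_parity cs hπζ t
  by_contra hmem
  rw [List.count_eq_zero.mpr hmem] at hpar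
  rw [Nat.odd_iff] at hodd
  have h1 : ((cs.rightInvSeq (α ++ (γ ++ i :: γ.reverse))).count t : ZMod 2) = 1 := by
    rw [← ZMod.natCast_mod, hodd]
    norm_num
  rw [hpar] at h1
  simp at h1

lemma exists_eraseIdx_of_isRightInversion {ω : List B} (hω : cs.IsReduced ω) {t : W}
    (ht : cs.IsRightInversion (π ω) t) :
    ∃ j, j < ω.length ∧ π (ω.eraseIdx j) = π ω * t := by
  have hmem := mem_rightInvSeq_of_isRightInversion cs hω ht
  obtain ⟨j, hj, hget⟩ := List.getElem_of_mem hmem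
  rw [cs.length_rightInvSeq] at hj
  refine ⟨j, hj, ?_⟩
  rw [← cs.wordProd_mul_getD_rightInvSeq ω j]
  congr 1
  rw [List.getD_eq_getElem?_getD, List.getElem?_eq_getElem (by rw [cs.length_rightInvSeq]; exact hj)]
  simpa using hget
lemma wordProd_append_singleton (ω : List B) (c : B) : π (ω ++ [c]) = π ω * σ c := by
  rw [cs.wordProd_append, cs.wordProd_cons, cs.wordProd_nil, mul_one]

/-- Deletion: every word has a reduced sublist with the same product. -/
lemma exists_reduced_sublist (ω : List B) :
    ∃ τ : List B, τ.Sublist ω ∧ cs.IsReduced τ ∧ π τ = π ω := by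
  induction ω using List.reverseRecOn with
  | nil => exact ⟨[], List.Sublist.refl _, by simp [CoxeterSystem.IsReduced], rfl⟩
  | append_singleton ω c ih =>
    obtain ⟨τ₁, hsub₁, hred₁, hπ₁⟩ := ih
    rcases cs.length_mul_simple (π τ₁) c with hup | hdown
    · refine ⟨τ₁ ++ [c], hsub₁.append_right [c], ?_, ?_⟩
      · show ℓ (π (τ₁ ++ [c])) = _
        rw [wordProd_append_singleton cs, hup, hred₁]
        simp
      · rw [wordProd_append_singleton cs, wordProd_append_singleton cs, hπ₁]
    · have hinv : cs.IsRightInversion (π τ₁) (σ c) :=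
        ⟨cs.isReflection_simple c, by omega⟩
      obtain ⟨j, hj, hπj⟩ := exists_eraseIdx_of_isRightInversion cs hred₁ hinv
      refine ⟨τ₁.eraseIdx j, ((τ₁.eraseIdx_sublist j).trans hsub₁).trans
        (List.sublist_append_left ω [c]), ?_, ?_⟩
      · show ℓ (π (τ₁.eraseIdx j)) = _
        rw [hπj]
        have h2 : (τ₁.eraseIdx j).length + 1 = τ₁.length := List.length_eraseIdx_add_one hj
        rw [CoxeterSystem.IsReduced] at hred₁
        omega
      · rw [hπj, wordProd_append_singleton cs, hπ₁]

/-- A single step in a Bruhat chain. -/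
def BStep (z z' : W) : Prop :=
  (∃ t : W, cs.IsReflection t ∧ z' = z * t) ∧ ℓ z < ℓ z'

/-- Bruhat chains. -/
def BChain : W → W → Prop := Relation.ReflTransGen (BStep cs)

lemma subword_of_bstep {z z' : W} (h : BStep cs z z') {ω : List B}
    (hω : cs.IsReduced ω) (hπ : π ω = z') :
    ∃ τ : List B, τ.Sublist ω ∧ cs.IsReduced τ ∧ π τ = z := by
  obtain ⟨⟨t, htr, hz⟩, hlen⟩ := h
  have hzz : z' * t = z := by rw [hz, mul_assoc, htr.mul_self, mul_one]
  have hinv : cs.IsRightInversion (π ω) t := by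
    refine ⟨htr, ?_⟩
    rw [hπ, hzz]
    exact hlen
  obtain ⟨j, hj, hπj⟩ := exists_eraseIdx_of_isRightInversion cs hω hinv
  obtain ⟨τ, hsub, hred, hπτ⟩ := exists_reduced_sublist cs (ω.eraseIdx j)
  exact ⟨τ, hsub.trans (ω.eraseIdx_sublist j), hred, by rw [hπτ, hπj, hπ, hzz]⟩

lemma subword_of_bchain {z w : W} (h : BChain cs z w) :
    ∀ ω : List B, cs.IsReduced ω → π ω = w →
      ∃ τ : List B, τ.Sublist ω ∧ cs.IsReduced τ ∧ π τ = z := by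
  induction h with
  | refl => exact fun ω hred hπ => ⟨ω, List.Sublist.refl _, hred, hπ⟩
  | tail hbc hstep ih =>
    intro ω hred hπ
    obtain ⟨τ, hsub, hredτ, hπτ⟩ := subword_of_bstep cs hstep hred hπ
    obtain ⟨τ', hsub', hred', hπ'⟩ := ih τ hredτ hπτ
    exact ⟨τ', hsub'.trans hsub, hred', hπ'⟩

/-- `grow c z` is the larger of `z` and `z * σ c`. -/
noncomputable def grow (c : B) (z : W) : W :=
  if ℓ (z * σ c) ≤ ℓ z then z else z * σ c

lemma grow_of_ascent {c : B} {z : W} (h : ℓ (z * σ c) = ℓ z + 1) :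
    grow cs c z = z * σ c := by
  rw [grow, if_neg (by omega)]

lemma grow_of_descent {c : B} {z : W} (h : ℓ (z * σ c) + 1 = ℓ z) :
    grow cs c z = z := by
  rw [grow, if_pos (by omega)]

lemma bchain_grow (c : B) (m : ℕ)
    (hB : ∀ z z' : W, ℓ z' ≤ m → BStep cs z z' → BChain cs (grow cs c z) (grow cs c z'))
    {z w : W} (h : BChain cs z w) (hw : ℓ w ≤ m) :
    BChain cs (grow cs c z) (grow cs c w) := by
  induction h with
  | refl => exact Relation.ReflTransGen.refl
  | @tail b w' hbc hstep ih =>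
    exact Relation.ReflTransGen.trans (ih (by have := hstep.2; omega)) (hB b w' hw hstep)

/-- The main mutual induction. -/
lemma chain_main (n : ℕ) :
    (∀ ω ω' : List B, cs.IsReduced ω → ω.length ≤ n → ω'.Sublist ω → cs.IsReduced ω' →
        BChain cs (π ω') (π ω))
    ∧ (∀ z z' : W, ℓ z' ≤ n → BStep cs z z' → ∀ c : B,
        BChain cs (grow cs c z) (grow cs c z')) := by
  induction n using Nat.strong_induction_on with
  | _ n IH =>
  constructor
  · -- part A
    intro ω ω' hred hlen hsub hred'
    rcases List.eq_nil_or_concat ω with rfl | ⟨ω₁, c, rfl⟩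
    · rw [List.sublist_nil.mp hsub]
      exact Relation.ReflTransGen.refl
    · rw [List.concat_eq_append] at hsub hred hlen ⊢
      have hn1 : ω₁.length + 1 ≤ n := by
        simpa using hlen
      have hred₁ : cs.IsReduced ω₁ := by
        have := CoxeterSystem.IsReduced.take hred ω₁.length
        rwa [List.take_left] at this
      have hπred : ℓ (π (ω₁ ++ [c])) = ω₁.length + 1 := by
        rw [hred]; simp
      have hasc : ℓ (π ω₁ * σ c) = ℓ (π ω₁) + 1 := by
        rw [← wordProd_append_singleton cs, hπred, hred₁]
      have hstep : BStep cs (π ω₁) (π (ω₁ ++ [c])) := by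
        refine ⟨⟨σ c, cs.isReflection_simple c, wordProd_append_singleton cs ω₁ c⟩, ?_⟩
        rw [hπred, hred₁]
        omega
      rw [List.sublist_append_iff] at hsub
      obtain ⟨l₁, l₂, rfl, hl₁, hl₂⟩ := hsub
      rcases List.sublist_singleton.mp hl₂ with rfl | rfl
      · rw [List.append_nil] at hred' ⊢
        have hch := (IH (n-1) (by omega)).1 ω₁ l₁ hred₁ (by omega) hl₁ hred'
        exact hch.tail hstep
      · have hredl₁ : cs.IsReduced l₁ := by
          have := CoxeterSystem.IsReduced.take hred' l₁.length
          rwa [List.take_left] at this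
        have hch := (IH (n-1) (by omega)).1 ω₁ l₁ hred₁ (by omega) hl₁ hredl₁
        have hgrow := bchain_grow cs c (n-1)
          (fun z z' hz hst => (IH (n-1) (by omega)).2 z z' hz hst c) hch
          (by rw [hred₁]; omega)
        have hπred' : ℓ (π (l₁ ++ [c])) = l₁.length + 1 := by
          rw [hred']; simp
        have hascl : ℓ (π l₁ * σ c) = ℓ (π l₁) + 1 := by
          rw [← wordProd_append_singleton cs, hπred', hredl₁]
        rw [grow_of_ascent cs hascl, grow_of_ascent cs hasc] at hgrow
        rw [wordProd_append_singleton cs, wordProd_append_singleton cs]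
        exact hgrow
  · -- part B
    intro z z' hn hstep c
    obtain ⟨⟨t, htr, rfl⟩, hlt⟩ := hstep
    have hztt : z * t * t = z := by rw [mul_assoc, htr.mul_self, mul_one]
    rcases cs.length_mul_simple z c with hza | hzd
    · rcases cs.length_mul_simple (z * t) c with hz'a | hz'd
      · -- both ascend
        rw [grow_of_ascent cs hza, grow_of_ascent cs hz'a]
        refine Relation.ReflTransGen.single ⟨⟨σ c * t * σ c, ?_, ?_⟩, by omega⟩
        · have := htr.conj (σ c)
          simpa using this
        · rw [show z * σ c * (σ c * t * σ c) = z * (σ c * (σ c * (t * σ c))) by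
            simp [mul_assoc]]
          rw [cs.simple_mul_simple_cancel_left]
          simp [mul_assoc]
      · -- z ascends, z' = z*t descends
        rw [grow_of_ascent cs hza, grow_of_descent cs hz'd]
        obtain ⟨ρ, hρred, hρπ⟩ := cs.exists_reduced_word' (z * t * σ c)
        have hρlen : ρ.length = ℓ (z * t * σ c) := by
          rw [CoxeterSystem.IsReduced] at hρred
          rw [← hρπ] at hρred
          omega
        have hπ2 : π (ρ ++ [c]) = z * t := by
          rw [wordProd_append_singleton cs, ← hρπ, mul_assoc,
            cs.simple_mul_simple_self, mul_one]
        have hred2 : cs.IsReduced (ρ ++ [c]) := by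
          show ℓ (π (ρ ++ [c])) = _
          rw [hπ2]
          simp only [List.length_append, List.length_singleton]
          omega
        have hinv : cs.IsRightInversion (π (ρ ++ [c])) t := by
          refine ⟨htr, ?_⟩
          rw [hπ2, hztt]
          exact hlt
        obtain ⟨j, hj, hπj⟩ := exists_eraseIdx_of_isRightInversion cs hred2 hinv
        rw [hπ2, hztt] at hπj
        by_cases hjρ : j < ρ.length
        · rw [List.eraseIdx_append_of_lt_length hjρ] at hπj
          have hz2 : π (ρ.eraseIdx j) = z * σ c := by
            have h3 : π (ρ.eraseIdx j) * σ c = z := by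
              rw [← wordProd_append_singleton cs, hπj]
            rw [← h3, mul_assoc, cs.simple_mul_simple_self, mul_one]
          obtain ⟨τ, hτsub, hτred, hτπ⟩ := exists_reduced_sublist cs (ρ.eraseIdx j)
          have hch := (IH (n-1) (by omega)).1 ρ τ hρred (by omega)
            (hτsub.trans (ρ.eraseIdx_sublist j)) hτred
          rw [hτπ, hz2, ← hρπ] at hch
          refine hch.tail ?_
          refine ⟨⟨σ c, cs.isReflection_simple c, ?_⟩, by omega⟩
          rw [mul_assoc, cs.simple_mul_simple_self, mul_one]
        · have hje : j = ρ.length := by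
            simp only [List.length_append, List.length_singleton] at hj
            omega
          rw [hje, List.eraseIdx_append_of_length_le le_rfl] at hπj
          simp only [List.length_append, List.length_singleton, Nat.sub_self,
            List.eraseIdx_cons_zero, List.append_nil] at hπj
          have h5 : z * t * σ c = z := by rw [hρπ, hπj]
          have h6 : z * t * σ c * σ c = z * σ c := by rw [h5]
          rw [cs.simple_mul_simple_cancel_right] at h6
          rw [h6]
          exact Relation.ReflTransGen.refl
    · rcases cs.length_mul_simple (z * t) c with hz'a | hz'd
      · -- z descends, z' ascends
        rw [grow_of_descent cs hzd, grow_of_ascent cs hz'a]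
        refine Relation.ReflTransGen.tail
          (Relation.ReflTransGen.single ⟨⟨t, htr, rfl⟩, hlt⟩) ?_
        exact ⟨⟨σ c, cs.isReflection_simple c, rfl⟩, by omega⟩
      · -- both descend
        rw [grow_of_descent cs hzd, grow_of_descent cs hz'd]
        exact Relation.ReflTransGen.single ⟨⟨t, htr, rfl⟩, hlt⟩
/-! ### Bruhat order lemmas -/

lemma bruhatLE_subword {v w : W} (h : cs.BruhatLE v w) {ω : List B}
    (hω : cs.IsReduced ω) (hπ : π ω = w) :
    ∃ τ : List B, τ.Sublist ω ∧ cs.IsReduced τ ∧ π τ = v := by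
  obtain ⟨ρ, hρred, hρπ, ρ', hsub, hred', hπ'⟩ := h
  have hch := (chain_main cs ρ.length).1 ρ ρ' hρred le_rfl hsub hred'
  rw [hρπ, hπ'] at hch
  exact subword_of_bchain cs hch ω hω hπ

lemma bruhatLE_refl (x : W) : cs.BruhatLE x x := by
  obtain ⟨ω, hred, hπ⟩ := cs.exists_reduced_word' x
  exact ⟨ω, hred, hπ.symm, ω, List.Sublist.refl _, hred, hπ.symm⟩

lemma bruhatLE_trans {u v w : W} (h1 : cs.BruhatLE u v) (h2 : cs.BruhatLE v w) :
    cs.BruhatLE u w := by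
  obtain ⟨ω, hred, hπ, τ, hsub, hredτ, hπτ⟩ := h2
  obtain ⟨τ', hsub', hred', hπ'⟩ := bruhatLE_subword cs h1 hredτ hπτ
  exact ⟨ω, hred, hπ, τ', hsub'.trans hsub, hred', hπ'⟩

lemma bruhatLE_mul_simple_right_asc {w : W} {c : B} (h : ℓ (w * σ c) = ℓ w + 1) :
    cs.BruhatLE w (w * σ c) := by
  obtain ⟨ω, hred, hπ⟩ := cs.exists_reduced_word' w
  refine ⟨ω ++ [c], ?_, ?_, ω, List.sublist_append_left ω [c], hred, hπ.symm⟩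
  · show ℓ (π (ω ++ [c])) = _
    rw [wordProd_append_singleton cs, ← hπ, h]
    rw [CoxeterSystem.IsReduced] at hred
    rw [← hπ] at hred
    simp
    omega
  · rw [wordProd_append_singleton cs, hπ]

lemma bruhatLE_mul_simple_right_desc {w : W} {c : B} (h : ℓ (w * σ c) + 1 = ℓ w) :
    cs.BruhatLE (w * σ c) w := by
  obtain ⟨ρ, hred, hπ⟩ := cs.exists_reduced_word' (w * σ c)
  have hπ2 : π (ρ ++ [c]) = w := by
    rw [wordProd_append_singleton cs, ← hπ, mul_assoc, cs.simple_mul_simple_self, mul_one]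
  refine ⟨ρ ++ [c], ?_, hπ2, ρ, List.sublist_append_left ρ [c], hred, hπ.symm⟩
  · show ℓ (π (ρ ++ [c])) = _
    rw [hπ2]
    rw [CoxeterSystem.IsReduced] at hred
    rw [← hπ] at hred
    simp
    omega

lemma bruhatLE_simple_mul_left_asc {w : W} {c : B} (h : ℓ (σ c * w) = ℓ w + 1) :
    cs.BruhatLE w (σ c * w) := by
  obtain ⟨ω, hred, hπ⟩ := cs.exists_reduced_word' w
  refine ⟨c :: ω, ?_, ?_, ω, List.sublist_cons_self c ω, hred, hπ.symm⟩
  · show ℓ (π (c :: ω)) = _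
    rw [cs.wordProd_cons, ← hπ, h]
    rw [CoxeterSystem.IsReduced] at hred
    rw [← hπ] at hred
    simp
    omega
  · rw [cs.wordProd_cons, hπ]

lemma bruhatLE_simple_mul_left_desc {w : W} {c : B} (h : ℓ (σ c * w) + 1 = ℓ w) :
    cs.BruhatLE (σ c * w) w := by
  obtain ⟨ρ, hred, hπ⟩ := cs.exists_reduced_word' (σ c * w)
  have hπ2 : π (c :: ρ) = w := by
    rw [cs.wordProd_cons, ← hπ, cs.simple_mul_simple_cancel_left]
  refine ⟨c :: ρ, ?_, hπ2, ρ, List.sublist_cons_self c ρ, hred, hπ.symm⟩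
  · show ℓ (π (c :: ρ)) = _
    rw [hπ2]
    rw [CoxeterSystem.IsReduced] at hred
    rw [← hπ] at hred
    simp
    omega

/-- (R1): lifting along a common right descent. -/
lemma bruhatLE_R1 {v w : W} {c : B} (hw : ℓ (w * σ c) + 1 = ℓ w)
    (hv : ℓ (v * σ c) + 1 = ℓ v) (h : cs.BruhatLE v w) :
    cs.BruhatLE (v * σ c) (w * σ c) := by
  obtain ⟨ρ, hρred, hρπ⟩ := cs.exists_reduced_word' (w * σ c)
  have hπ2 : π (ρ ++ [c]) = w := by
    rw [wordProd_append_singleton cs, ← hρπ, mul_assoc, cs.simple_mul_simple_self, mul_one]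
  have hred2 : cs.IsReduced (ρ ++ [c]) := by
    show ℓ (π (ρ ++ [c])) = _
    rw [hπ2]
    rw [CoxeterSystem.IsReduced] at hρred
    rw [← hρπ] at hρred
    simp
    omega
  obtain ⟨τ, hτsub, hτred, hτπ⟩ := bruhatLE_subword cs h hred2 hπ2
  rw [List.sublist_append_iff] at hτsub
  obtain ⟨l₁, l₂, rfl, hl₁, hl₂⟩ := hτsub
  rcases List.sublist_singleton.mp hl₂ with rfl | rfl
  · -- τ ⊑ ρ : v ≤ w * σ c, and v * σ c ≤ v
    rw [List.append_nil] at hτred hτπ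
    have h1 : cs.BruhatLE v (w * σ c) := ⟨ρ, hρred, hρπ.symm, l₁, hl₁, hτred, hτπ⟩
    exact bruhatLE_trans cs (bruhatLE_mul_simple_right_desc cs hv) h1
  · -- τ = l₁ ++ [c]
    have hπl₁ : π l₁ = v * σ c := by
      have : π (l₁ ++ [c]) = v := hτπ
      rw [wordProd_append_singleton cs] at this
      rw [← this, mul_assoc, cs.simple_mul_simple_self, mul_one]
    have hredl₁ : cs.IsReduced l₁ := by
      have := CoxeterSystem.IsReduced.take hτred l₁.length
      rwa [List.take_left] at this
    exact ⟨ρ, hρred, hρπ.symm, l₁, hl₁, hredl₁, hπl₁⟩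

/-- (R2). -/
lemma bruhatLE_R2 {v w : W} {c : B} (hw : ℓ (w * σ c) + 1 = ℓ w)
    (hv : ℓ (v * σ c) = ℓ v + 1) (h : cs.BruhatLE v w) :
    cs.BruhatLE v (w * σ c) := by
  obtain ⟨ρ, hρred, hρπ⟩ := cs.exists_reduced_word' (w * σ c)
  have hπ2 : π (ρ ++ [c]) = w := by
    rw [wordProd_append_singleton cs, ← hρπ, mul_assoc, cs.simple_mul_simple_self, mul_one]
  have hred2 : cs.IsReduced (ρ ++ [c]) := by
    show ℓ (π (ρ ++ [c])) = _
    rw [hπ2]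
    rw [CoxeterSystem.IsReduced] at hρred
    rw [← hρπ] at hρred
    simp
    omega
  obtain ⟨τ, hτsub, hτred, hτπ⟩ := bruhatLE_subword cs h hred2 hπ2
  rw [List.sublist_append_iff] at hτsub
  obtain ⟨l₁, l₂, rfl, hl₁, hl₂⟩ := hτsub
  rcases List.sublist_singleton.mp hl₂ with rfl | rfl
  · rw [List.append_nil] at hτred hτπ
    exact ⟨ρ, hρred, hρπ.symm, l₁, hl₁, hτred, hτπ⟩
  · exfalso
    have hπl₁ : π l₁ = v * σ c := by
      have : π (l₁ ++ [c]) = v := hτπ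
      rw [wordProd_append_singleton cs] at this
      rw [← this, mul_assoc, cs.simple_mul_simple_self, mul_one]
    have hbound : ℓ (v * σ c) ≤ l₁.length := by
      rw [← hπl₁]; exact cs.length_wordProd_le l₁
    have hτlen : ℓ v = l₁.length + 1 := by
      rw [CoxeterSystem.IsReduced] at hτred
      rw [hτπ] at hτred
      simpa using hτred
    omega

/-- (R5): lifting along a common right ascent. -/
lemma bruhatLE_R5 {v w : W} {c : B} (hw : ℓ (w * σ c) = ℓ w + 1)
    (hv : ℓ (v * σ c) = ℓ v + 1) (h : cs.BruhatLE v w) :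
    cs.BruhatLE (v * σ c) (w * σ c) := by
  obtain ⟨ω, hred, hπ⟩ := cs.exists_reduced_word' w
  obtain ⟨τ, hτsub, hτred, hτπ⟩ := bruhatLE_subword cs h hred hπ.symm
  refine ⟨ω ++ [c], ?_, ?_, τ ++ [c], hτsub.append_right [c], ?_, ?_⟩
  · show ℓ (π (ω ++ [c])) = _
    rw [wordProd_append_singleton cs, ← hπ, hw]
    rw [CoxeterSystem.IsReduced] at hred
    rw [← hπ] at hred
    simp
    omega
  · rw [wordProd_append_singleton cs, hπ]
  · show ℓ (π (τ ++ [c])) = _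
    rw [wordProd_append_singleton cs, hτπ, hv]
    rw [CoxeterSystem.IsReduced] at hτred
    rw [hτπ] at hτred
    simp
    omega
  · rw [wordProd_append_singleton cs, hτπ]

/-- (L1): lifting along a common left descent. -/
lemma bruhatLE_L1 {v w : W} {c : B} (hw : ℓ (σ c * w) + 1 = ℓ w)
    (hv : ℓ (σ c * v) + 1 = ℓ v) (h : cs.BruhatLE v w) :
    cs.BruhatLE (σ c * v) (σ c * w) := by
  obtain ⟨ρ, hρred, hρπ⟩ := cs.exists_reduced_word' (σ c * w)
  have hπ2 : π (c :: ρ) = w := by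
    rw [cs.wordProd_cons, ← hρπ, cs.simple_mul_simple_cancel_left]
  have hred2 : cs.IsReduced (c :: ρ) := by
    show ℓ (π (c :: ρ)) = _
    rw [hπ2]
    rw [CoxeterSystem.IsReduced] at hρred
    rw [← hρπ] at hρred
    simp
    omega
  obtain ⟨τ, hτsub, hτred, hτπ⟩ := bruhatLE_subword cs h hred2 hπ2
  rw [List.sublist_cons_iff] at hτsub
  rcases hτsub with hτsub | ⟨τ₁, rfl, hτ₁⟩
  · have h1 : cs.BruhatLE v (σ c * w) := ⟨ρ, hρred, hρπ.symm, τ, hτsub, hτred, hτπ⟩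
    exact bruhatLE_trans cs (bruhatLE_simple_mul_left_desc cs hv) h1
  · have hπτ₁ : π τ₁ = σ c * v := by
      have : π (c :: τ₁) = v := hτπ
      rw [cs.wordProd_cons] at this
      rw [← this, cs.simple_mul_simple_cancel_left]
    have hredτ₁ : cs.IsReduced τ₁ := by
      have := CoxeterSystem.IsReduced.drop hτred 1
      simpa using this
    exact ⟨ρ, hρred, hρπ.symm, τ₁, hτ₁, hredτ₁, hπτ₁⟩

/-- (L2). -/
lemma bruhatLE_L2 {v w : W} {c : B} (hw : ℓ (σ c * w) + 1 = ℓ w)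
    (hv : ℓ (σ c * v) = ℓ v + 1) (h : cs.BruhatLE v w) :
    cs.BruhatLE v (σ c * w) := by
  obtain ⟨ρ, hρred, hρπ⟩ := cs.exists_reduced_word' (σ c * w)
  have hπ2 : π (c :: ρ) = w := by
    rw [cs.wordProd_cons, ← hρπ, cs.simple_mul_simple_cancel_left]
  have hred2 : cs.IsReduced (c :: ρ) := by
    show ℓ (π (c :: ρ)) = _
    rw [hπ2]
    rw [CoxeterSystem.IsReduced] at hρred
    rw [← hρπ] at hρred
    simp
    omega
  obtain ⟨τ, hτsub, hτred, hτπ⟩ := bruhatLE_subword cs h hred2 hπ2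
  rw [List.sublist_cons_iff] at hτsub
  rcases hτsub with hτsub | ⟨τ₁, rfl, hτ₁⟩
  · exact ⟨ρ, hρred, hρπ.symm, τ, hτsub, hτred, hτπ⟩
  · exfalso
    have hπτ₁ : π τ₁ = σ c * v := by
      have : π (c :: τ₁) = v := hτπ
      rw [cs.wordProd_cons] at this
      rw [← this, cs.simple_mul_simple_cancel_left]
    have hbound : ℓ (σ c * v) ≤ τ₁.length := by
      rw [← hπτ₁]; exact cs.length_wordProd_le τ₁
    have hτlen : ℓ v = τ₁.length + 1 := by
      rw [CoxeterSystem.IsReduced] at hτred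
      rw [hτπ] at hτred
      simpa using hτred
    omega

/-- (L5): lifting along a common left ascent. -/
lemma bruhatLE_L5 {v w : W} {c : B} (hw : ℓ (σ c * w) = ℓ w + 1)
    (hv : ℓ (σ c * v) = ℓ v + 1) (h : cs.BruhatLE v w) :
    cs.BruhatLE (σ c * v) (σ c * w) := by
  obtain ⟨ω, hred, hπ⟩ := cs.exists_reduced_word' w
  obtain ⟨τ, hτsub, hτred, hτπ⟩ := bruhatLE_subword cs h hred hπ.symm
  refine ⟨c :: ω, ?_, ?_, c :: τ, hτsub.cons₂ c, ?_, ?_⟩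
  · show ℓ (π (c :: ω)) = _
    rw [cs.wordProd_cons, ← hπ, hw]
    rw [CoxeterSystem.IsReduced] at hred
    rw [← hπ] at hred
    simp
    omega
  · rw [cs.wordProd_cons, hπ]
  · show ℓ (π (c :: τ)) = _
    rw [cs.wordProd_cons, hτπ, hv]
    rw [CoxeterSystem.IsReduced] at hτred
    rw [hτπ] at hτred
    simp
    omega
  · rw [cs.wordProd_cons, hτπ]
end BruhatAux

/-- Let `(W,S)` be a Coxeter system, `x y ∈ W` and `s, t ∈ S` with `y = s·x·t` and
`ℓ(x) = ℓ(y)`.  Then for every `x' ≤ x` (Bruhat order), either `x' ≤ y`, or both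
`s·x'·t ≤ y` and `ℓ(s·x'·t) ≤ ℓ(x')`. -/
theorem stmt0 {B : Type*} {W : Type*} [Group W] {M : CoxeterMatrix B}
    (cs : CoxeterSystem M W) (x y : W) (s t : B)
    (hy : y = cs.simple s * x * cs.simple t)
    (hlen : cs.length x = cs.length y)
    (x' : W) (hx' : cs.BruhatLE x' x) :
    cs.BruhatLE x' y ∨
      (cs.BruhatLE (cs.simple s * x' * cs.simple t) y ∧
        cs.length (cs.simple s * x' * cs.simple t) ≤ cs.length x') := by
  classical
  by_cases hyx : y = x
  · left; rw [hyx]; exact hx'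
  have hyl : cs.length (cs.simple s * x * cs.simple t) = cs.length x := by
    rw [← hy]; exact hlen.symm
  have hassoc : cs.simple s * (x * cs.simple t) = cs.simple s * x * cs.simple t :=
    (mul_assoc _ _ _).symm
  have hassoc' : cs.simple s * (x' * cs.simple t) = cs.simple s * x' * cs.simple t :=
    (mul_assoc _ _ _).symm
  rcases cs.length_simple_mul x s with hsa | hsd
  · -- Case B : ℓ(sx) = ℓ(x) + 1
    have hub : cs.length (cs.simple s * x * cs.simple t) + 1
        = cs.length (cs.simple s * x) := by omega
    -- first derive ℓ(x·t) + 1 = ℓ(x)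
    have hxb : cs.length (x * cs.simple t) + 1 = cs.length x := by
      rcases cs.length_mul_simple x t with hxa | hxd
      · exfalso
        obtain ⟨ω₀, hred₀, hπ₀⟩ := cs.exists_reduced_word' x
        have hπκ : cs.wordProd (s :: ω₀) = cs.simple s * x := by
          rw [cs.wordProd_cons, hπ₀]
        have hlen₀ : ω₀.length = cs.length x := by
          rw [CoxeterSystem.IsReduced] at hred₀
          rw [← hπ₀] at hred₀
          omega
        have hredκ : cs.IsReduced (s :: ω₀) := by
          show cs.length (cs.wordProd (s :: ω₀)) = _
          rw [hπκ]
          simp only [List.length_cons]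
          omega
        have hinv : cs.IsRightInversion (cs.wordProd (s :: ω₀)) (cs.simple t) :=
          ⟨cs.isReflection_simple t, by rw [hπκ]; omega⟩
        obtain ⟨j, hj, hπj⟩ := BruhatAux.exists_eraseIdx_of_isRightInversion cs hredκ hinv
        rw [hπκ] at hπj
        rcases j with _ | j'
        · simp only [List.eraseIdx_cons_zero] at hπj
          exact hyx (by rw [hy, ← hπj, hπ₀])
        · rw [List.eraseIdx_cons_succ, cs.wordProd_cons] at hπj
          have hxbe : cs.wordProd (ω₀.eraseIdx j') = x * cs.simple t := by
            apply mul_left_cancel (a := cs.simple s)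
            rw [hπj, hassoc]
          have hlb : cs.length (x * cs.simple t) ≤ (ω₀.eraseIdx j').length := by
            rw [← hxbe]; exact cs.length_wordProd_le _
          have hj' : j' < ω₀.length := by
            simpa using hj
          have hlen1 : (ω₀.eraseIdx j').length + 1 = ω₀.length :=
            List.length_eraseIdx_add_one hj'
          omega
      · exact hxd
    rcases cs.length_mul_simple x' t with h'ba | h'bd
    · -- right ascent at x' : x' ≤ y
      left
      have h1 : cs.BruhatLE x (cs.simple s * x) :=
        BruhatAux.bruhatLE_simple_mul_left_asc cs hsa
      have h2 := BruhatAux.bruhatLE_trans cs hx' h1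
      have h3 := BruhatAux.bruhatLE_R2 cs hub h'ba h2
      rwa [← hy] at h3
    · -- right descent at x'
      right
      have h1 := BruhatAux.bruhatLE_R1 cs hxb h'bd hx'
      have hyl2 : cs.length (cs.simple s * (x * cs.simple t))
          = cs.length (x * cs.simple t) + 1 := by
        rw [hassoc]; omega
      rcases cs.length_simple_mul (x' * cs.simple t) s with h2a | h2d
      · refine ⟨?_, ?_⟩
        · have h2 := BruhatAux.bruhatLE_L5 cs hyl2 h2a h1
          rw [hassoc, hassoc', ← hy] at h2
          exact h2
        · rw [← hassoc']
          omega
      · refine ⟨?_, ?_⟩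
        · have hd := BruhatAux.bruhatLE_simple_mul_left_desc cs h2d
          have h3 := BruhatAux.bruhatLE_simple_mul_left_asc cs hyl2
          have h4 := BruhatAux.bruhatLE_trans cs (BruhatAux.bruhatLE_trans cs hd h1) h3
          rw [hassoc, hassoc', ← hy] at h4
          exact h4
        · rw [← hassoc']
          omega
  · -- Case A : ℓ(sx) + 1 = ℓ(x)
    have hub : cs.length (cs.simple s * x * cs.simple t)
        = cs.length (cs.simple s * x) + 1 := by omega
    rcases cs.length_simple_mul x' s with h'a | h'd
    · -- left ascent at x' : x' ≤ y
      left
      have h1 := BruhatAux.bruhatLE_L2 cs hsd h'a hx'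
      have h2 := BruhatAux.bruhatLE_mul_simple_right_asc cs hub
      have h3 := BruhatAux.bruhatLE_trans cs h1 h2
      rwa [← hy] at h3
    · -- left descent at x'
      right
      have h1 := BruhatAux.bruhatLE_L1 cs hsd h'd hx'
      rcases cs.length_mul_simple (cs.simple s * x') t with h2a | h2d
      · refine ⟨?_, ?_⟩
        · have h2 := BruhatAux.bruhatLE_R5 cs hub h2a h1
          rwa [← hy] at h2
        · omega
      · refine ⟨?_, ?_⟩
        · have hd := BruhatAux.bruhatLE_mul_simple_right_desc cs h2d
          have h2 := BruhatAux.bruhatLE_mul_simple_right_asc cs hub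
          have h4 := BruhatAux.bruhatLE_trans cs (BruhatAux.bruhatLE_trans cs hd h1) h2
          rwa [← hy] at h4
        · omega
end

section
/- Let n ≥ 1 and r ≥ 0 be integers with 2r + 1 ≤ n. In the symmetric group 𝔖_n, the (2r+1)-cycle σ_{2r+1} := (1, n, 2, n−1, 3, n−2, …, r, n−r+1, r+1) (so σ_{2r+1} maps 1 ↦ n, n ↦ 2, 2 ↦ n−1, …, n−r+1 ↦ r+1, r+1 ↦ 1, and fixes all other points) satisfies σ_{2r+1} = s₁ s₂ ⋯ s_r · w₀ · w_{I}, where I = {r+1, r+2, …, n−1−r}. -/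
/-- The product `s₁ s₂ ⋯ s_r` acts as the cycle `(1 2 … r+1)⁻¹`: it sends
`i ↦ i+1` for `1 ≤ i ≤ r`, `r+1 ↦ 1`, and fixes everything else. -/
lemma prod_swaps_apply (r x : ℕ) :
    (((List.range r).map fun i => Equiv.swap (i + 1) (i + 2)).prod) x =
      if 1 ≤ x ∧ x ≤ r then x + 1 else if x = r + 1 then 1 else x := by
  induction r generalizing x with
  | zero =>
    simp only [List.range_zero, List.map_nil, List.prod_nil, Equiv.Perm.one_apply]
    split_ifs <;> omega
  | succ r ih =>
    rw [List.range_succ, List.map_append, List.prod_append]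
    simp only [List.map_cons, List.map_nil, List.prod_cons, List.prod_nil, mul_one,
      Equiv.Perm.mul_apply, Equiv.swap_apply_def]
    split_ifs with h1 h2 <;> rw [ih] <;> split_ifs <;> omega

/-- In the symmetric group `𝔖_n` (realized as permutations of `ℕ` supported on `{1,…,n}`,
with products composed as functions), the `(2r+1)`-cycle
`σ_{2r+1} = (1, n, 2, n−1, 3, …, n−r+1, r+1)` equals
`s₁ s₂ ⋯ s_r · w₀ · w_I` where `I = {r+1, …, n−1−r}`.
Here `s_i = (i, i+1)`, `w₀` is the longest element (`i ↦ n+1−i` on `{1,…,n}`), and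
`w_I` is the longest element of the parabolic subgroup generated by `{s_i : i ∈ I}`,
i.e. the reversal `j ↦ n+1−j` of the interval `{r+1, …, n−r}`. -/
theorem stmt4 (n r : ℕ) (hn : 1 ≤ n) (hr : 2 * r + 1 ≤ n)
    (σ w₀ wI : Equiv.Perm ℕ)
    (hw₀ : ∀ i : ℕ, (1 ≤ i ∧ i ≤ n → w₀ i = n + 1 - i) ∧ (¬(1 ≤ i ∧ i ≤ n) → w₀ i = i))
    (hwI : ∀ j : ℕ, (r + 1 ≤ j ∧ j ≤ n - r → wI j = n + 1 - j) ∧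
      (¬(r + 1 ≤ j ∧ j ≤ n - r) → wI j = j))
    (hσ₁ : ∀ i : ℕ, 1 ≤ i → i ≤ r → σ i = n + 1 - i)
    (hσ₂ : ∀ i : ℕ, 1 ≤ i → i ≤ r → σ (n + 1 - i) = i + 1)
    (hσ₃ : σ (r + 1) = 1)
    (hσ₄ : ∀ i : ℕ, ¬(1 ≤ i ∧ i ≤ r + 1) → ¬(n + 1 - r ≤ i ∧ i ≤ n) → σ i = i) :
    σ = ((List.range r).map fun i => Equiv.swap (i + 1) (i + 2)).prod * w₀ * wI := by
  ext x
  simp only [Equiv.Perm.mul_apply]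
  rw [prod_swaps_apply]
  obtain ⟨hwI1, hwI2⟩ := hwI x
  by_cases h1 : r + 1 ≤ x ∧ x ≤ n - r
  · rw [hwI1 h1]
    obtain ⟨hw1, _⟩ := hw₀ (n + 1 - x)
    rw [hw1 (by omega)]
    have hxx : n + 1 - (n + 1 - x) = x := by omega
    rw [hxx]
    by_cases h2 : x = r + 1
    · subst h2
      rw [hσ₃]
      split_ifs <;> omega
    · rw [hσ₄ x (by omega) (by omega)]
      split_ifs <;> omega
  · rw [hwI2 h1]
    by_cases h2 : 1 ≤ x ∧ x ≤ n
    · obtain ⟨hw1, _⟩ := hw₀ x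
      rw [hw1 h2]
      by_cases h3 : x ≤ r
      · rw [hσ₁ x h2.1 h3]
        split_ifs <;> omega
      · have hj : 1 ≤ n + 1 - x ∧ n + 1 - x ≤ r := by omega
        have hs := hσ₂ (n + 1 - x) hj.1 hj.2
        have hxx : n + 1 - (n + 1 - x) = x := by omega
        rw [hxx] at hs
        rw [hs]
        split_ifs <;> omega
    · obtain ⟨_, hw2⟩ := hw₀ x
      rw [hw2 h2]
      rw [hσ₄ x (by omega) (by omega)]
      split_ifs <;> omega
end

section
/- Let n, i, j be natural numbers with n ≥ 3i. Then, as integers, Σ_{k=0}^{i} Σ_{r=0}^{k} (−1)^k · C(i,k) · C(k,r) · C(n−3k, j−3r) = 3^i · C(n−2i, j−i), where in any term the binomial coefficient C(a,b) is understood to be 0 whenever its lower index b is negative or exceeds a. -/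
/-- The binomial coefficient `C(a, b)` with integer lower index, with the convention
that it vanishes when `b < 0` (and also when `b > a`, as for `Nat.choose`). -/
def ibinom (a : ℕ) (b : ℤ) : ℤ := if 0 ≤ b then (a.choose b.toNat : ℤ) else 0


open Polynomial Finset

lemma L1 (m a j : ℕ) : ((1 + X : Polynomial ℤ)^m * X^a).coeff j = ibinom m ((j:ℤ) - a) := by
  rw [Polynomial.coeff_mul_X_pow']
  unfold ibinom
  split_ifs with h1 h2 h2
  · rw [Polynomial.coeff_one_add_X_pow]
    norm_cast
  · exfalso; omega
  · exfalso; omega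
  · rfl

lemma L2 (k : ℕ) : ((1:Polynomial ℤ) + X^3)^k
    = ∑ r ∈ Finset.range (k+1), C ((k.choose r : ℤ)) * X^(3*r) := by
  rw [add_comm, add_pow]
  refine Finset.sum_congr rfl fun r hr => ?_
  rw [← pow_mul, one_pow]
  simp [mul_comm]

lemma L3 (n i : ℕ) (h : 3 * i ≤ n) :
    ∑ k ∈ Finset.range (i+1), C ((-1:ℤ)^k * (i.choose k : ℤ)) *
        ((1 + X^3)^k * (1 + X)^(n - 3*k))
      = C ((3:ℤ)^i) * (X^i * (1 + X)^(n - 2*i)) := by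
  have step1 : ∑ k ∈ Finset.range (i+1), C ((-1:ℤ)^k * (i.choose k : ℤ)) *
        ((1 + X^3)^k * (1 + X)^(n - 3*k))
      = (∑ k ∈ Finset.range (i+1),
          (-((1:Polynomial ℤ) + X^3))^k * (((1+X)^3))^(i-k) * (i.choose k : Polynomial ℤ)) *
        (1 + X)^(n - 3*i) := by
    rw [Finset.sum_mul]
    refine Finset.sum_congr rfl fun k hk => ?_
    simp only [Finset.mem_range] at hk
    have hk' : n - 3*k = 3*(i-k) + (n - 3*i) := by omega
    rw [hk', pow_add, neg_pow ((1:Polynomial ℤ) + X^3), ← pow_mul]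
    simp only [map_mul, map_pow, map_neg, map_one, Polynomial.C_eq_natCast]
    ring
  rw [step1, ← add_pow]
  have key : (-((1:Polynomial ℤ) + X^3)) + (1+X)^3 = 3*(X*(1+X)) := by ring
  rw [key, mul_pow, mul_pow, mul_assoc, mul_assoc, ← pow_add]
  have h2 : i + (n - 3*i) = n - 2*i := by omega
  rw [h2]
  simp [map_pow]

/-- For natural numbers `n, i, j` with `n ≥ 3i`:
`Σ_{k=0}^{i} Σ_{r=0}^{k} (−1)^k C(i,k) C(k,r) C(n−3k, j−3r) = 3^i C(n−2i, j−i)`. -/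
theorem stmt9 (n i j : ℕ) (h : 3 * i ≤ n) :
    ∑ k ∈ Finset.range (i + 1), ∑ r ∈ Finset.range (k + 1),
        (-1 : ℤ) ^ k * (i.choose k : ℤ) * (k.choose r : ℤ) *
          ibinom (n - 3 * k) ((j : ℤ) - 3 * (r : ℤ))
      = 3 ^ i * ibinom (n - 2 * i) ((j : ℤ) - (i : ℤ)) := by
  have key := congrArg (fun p => Polynomial.coeff p j) (L3 n i h)
  simp only [Polynomial.finset_sum_coeff, Polynomial.coeff_C_mul] at key
  calc ∑ k ∈ Finset.range (i + 1), ∑ r ∈ Finset.range (k + 1),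
        (-1 : ℤ) ^ k * (i.choose k : ℤ) * (k.choose r : ℤ) *
          ibinom (n - 3 * k) ((j : ℤ) - 3 * (r : ℤ))
      = ∑ k ∈ Finset.range (i+1), (-1:ℤ)^k * (i.choose k : ℤ) *
          (((1 + X^3 : Polynomial ℤ)^k * (1 + X)^(n - 3*k)).coeff j) := by
        refine Finset.sum_congr rfl fun k hk => ?_
        rw [L2, Finset.sum_mul, Polynomial.finset_sum_coeff, Finset.mul_sum]
        refine Finset.sum_congr rfl fun r hr => ?_
        rw [show (C ((k.choose r : ℕ) : ℤ) * X^(3*r) * (1+X)^(n-3*k) : Polynomial ℤ)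
            = C ((k.choose r : ℕ) : ℤ) * ((1+X)^(n-3*k) * X^(3*r)) from by ring,
          Polynomial.coeff_C_mul, L1]
        push_cast
        ring
    _ = 3 ^ i * ibinom (n - 2 * i) ((j : ℤ) - (i : ℤ)) := by
        rw [key, mul_comm ((X : Polynomial ℤ)^i), L1]
end

section
/- Let n, i, j be natural numbers with i ≤ j and n ≥ 3i. Then, as integers, Σ_{k=0}^{i} Σ_{r=0}^{k} (−1)^k · C(i,k) · C(k,r) · ( C(n−3k, j−3r) − C(n−3k, j−3r−1) ) = 3^i · ( C(n−2i, j−i) − C(n−2i, j−i−1) ), where in any term the binomial coefficient C(a,b) is understood to be 0 whenever its lower index b is negative or exceeds a. -/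
namespace Stmt10Aux

/-- The "ballot" difference of binomial coefficients. -/
def F (m : ℕ) (t : ℤ) : ℤ := ibinom m t - ibinom m (t - 1)

lemma ibinom_succ (m : ℕ) (t : ℤ) :
    ibinom (m + 1) t = ibinom m t + ibinom m (t - 1) := by
  unfold ibinom
  by_cases h0 : 0 ≤ t
  · by_cases h1 : 0 ≤ t - 1
    · have ht : t.toNat = (t - 1).toNat + 1 := by omega
      simp only [if_pos h0, if_pos h1, ht]
      rw [Nat.choose_succ_succ]
      push_cast
      ring
    · have ht : t = 0 := by omega
      simp [ht, h1]
  · have h1 : ¬ (0 ≤ t - 1) := by omega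
    simp only [if_neg h0, if_neg h1, add_zero]

lemma F_succ (m : ℕ) (t : ℤ) : F (m + 1) t = F m t + F m (t - 1) := by
  simp only [F, ibinom_succ]
  ring_nf

lemma F_three (m : ℕ) (t : ℤ) :
    F (m + 3) t = F m t + 3 * F m (t - 1) + 3 * F m (t - 2) + F m (t - 3) := by
  rw [show m + 3 = m + 1 + 1 + 1 from by ring]
  simp only [F_succ]
  rw [show t - 1 - 1 - 1 = t - 3 from by ring, show t - 1 - 1 = t - 2 from by ring]
  ring

lemma pascal_sum (k : ℕ) (g : ℕ → ℤ) :
    ∑ r ∈ Finset.range (k + 2), ((k + 1).choose r : ℤ) * g r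
      = ∑ r ∈ Finset.range (k + 1), (k.choose r : ℤ) * (g r + g (r + 1)) := by
  have h0 : ∑ r ∈ Finset.range (k + 2), ((k + 1).choose r : ℤ) * g r
      = ∑ r ∈ Finset.range (k + 1), ((k + 1).choose (r + 1) : ℤ) * g (r + 1)
        + ((k + 1).choose 0 : ℤ) * g 0 :=
    Finset.sum_range_succ' _ _
  have h1 : ∑ r ∈ Finset.range (k + 2), (k.choose r : ℤ) * g r
      = ∑ r ∈ Finset.range (k + 1), (k.choose (r + 1) : ℤ) * g (r + 1)
        + (k.choose 0 : ℤ) * g 0 :=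
    Finset.sum_range_succ' _ _
  have h2 : ∑ r ∈ Finset.range (k + 2), (k.choose r : ℤ) * g r
      = ∑ r ∈ Finset.range (k + 1), (k.choose r : ℤ) * g r := by
    rw [Finset.sum_range_succ]
    simp [Nat.choose_eq_zero_of_lt (by omega : k < k + 1)]
  have h3 : ∑ r ∈ Finset.range (k + 1), (k.choose (r + 1) : ℤ) * g (r + 1)
      = ∑ r ∈ Finset.range (k + 1), (k.choose r : ℤ) * g r
        - (k.choose 0 : ℤ) * g 0 := by omega
  have h4 : ∀ r ∈ Finset.range (k + 1),
      ((k + 1).choose (r + 1) : ℤ) * g (r + 1)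
        = (k.choose r : ℤ) * g (r + 1) + (k.choose (r + 1) : ℤ) * g (r + 1) := by
    intro r _
    rw [Nat.choose_succ_succ]
    push_cast
    ring
  rw [h0, Finset.sum_congr rfl h4, Finset.sum_add_distrib, h3]
  simp only [mul_add, Finset.sum_add_distrib, Nat.choose_zero_right, Nat.cast_one, one_mul]
  ring

lemma sum_split (s : Finset ℕ) (c f0 f1 f2 f3 : ℕ → ℤ) :
    ∑ r ∈ s, c r * (f0 r + 3 * f1 r + 3 * f2 r + f3 r)
      = ∑ r ∈ s, c r * (f0 r + f3 r) + 3 * ∑ r ∈ s, c r * f1 r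
        + 3 * ∑ r ∈ s, c r * f2 r := by
  rw [Finset.mul_sum, Finset.mul_sum, ← Finset.sum_add_distrib, ← Finset.sum_add_distrib]
  exact Finset.sum_congr rfl fun r _ => by ring

/-- The double sum. -/
def S (i n : ℕ) (t : ℤ) : ℤ :=
  ∑ k ∈ Finset.range (i + 1), (-1 : ℤ) ^ k * (i.choose k : ℤ) *
    ∑ r ∈ Finset.range (k + 1), (k.choose r : ℤ) * F (n - 3 * k) (t - 3 * r)

lemma key (i : ℕ) : ∀ n : ℕ, 3 * i ≤ n → ∀ t : ℤ,
    S i n t = 3 ^ i * F (n - 2 * i) (t - i) := by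
  induction i with
  | zero =>
    intro n _ t
    simp [S]
  | succ i ih =>
    intro n hn t
    have hn3 : 3 * i ≤ n - 3 := by omega
    -- rewrite S (i+1) n t using pascal_sum on the outer sum
    have houter : S (i + 1) n t
        = ∑ k ∈ Finset.range (i + 1), (i.choose k : ℤ) *
            ((-1 : ℤ) ^ k *
              (∑ r ∈ Finset.range (k + 1), (k.choose r : ℤ) * F (n - 3 * k) (t - 3 * r))
            + (-1 : ℤ) ^ (k + 1) *
              (∑ r ∈ Finset.range (k + 2), ((k + 1).choose r : ℤ) *
                F (n - 3 * (k + 1)) (t - 3 * r))) := by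
      have := pascal_sum i (fun k => (-1 : ℤ) ^ k *
        ∑ r ∈ Finset.range (k + 1), (k.choose r : ℤ) * F (n - 3 * k) (t - 3 * r))
      unfold S
      rw [show i + 1 + 1 = i + 2 from rfl]
      calc ∑ k ∈ Finset.range (i + 2), (-1 : ℤ) ^ k * ((i+1).choose k : ℤ) *
              ∑ r ∈ Finset.range (k + 1), (k.choose r : ℤ) * F (n - 3 * k) (t - 3 * r)
          = ∑ k ∈ Finset.range (i + 2), ((i+1).choose k : ℤ) *
              ((-1 : ℤ) ^ k *
              ∑ r ∈ Finset.range (k + 1), (k.choose r : ℤ) * F (n - 3 * k) (t - 3 * r)) := by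
            apply Finset.sum_congr rfl; intro k _; ring
        _ = _ := this
    -- simplify each outer term using pascal_sum on the inner sum and F_three
    have hterm : ∀ k ∈ Finset.range (i + 1),
        (i.choose k : ℤ) *
            ((-1 : ℤ) ^ k *
              (∑ r ∈ Finset.range (k + 1), (k.choose r : ℤ) * F (n - 3 * k) (t - 3 * r))
            + (-1 : ℤ) ^ (k + 1) *
              (∑ r ∈ Finset.range (k + 2), ((k + 1).choose r : ℤ) *
                F (n - 3 * (k + 1)) (t - 3 * r)))
        = 3 * ((-1 : ℤ) ^ k * (i.choose k : ℤ) *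
            (∑ r ∈ Finset.range (k + 1), (k.choose r : ℤ) * F ((n - 3) - 3 * k) ((t - 1) - 3 * r))
          + (-1 : ℤ) ^ k * (i.choose k : ℤ) *
            (∑ r ∈ Finset.range (k + 1), (k.choose r : ℤ) * F ((n - 3) - 3 * k) ((t - 2) - 3 * r))) := by
      intro k hk
      have hk' : k < i + 1 := Finset.mem_range.mp hk
      have hm : n - 3 * (k + 1) = (n - 3) - 3 * k := by omega
      have hm3 : n - 3 * k = ((n - 3) - 3 * k) + 3 := by omega
      rw [hm, pascal_sum k (fun r => F ((n - 3) - 3 * k) (t - 3 * r))]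
      set m := (n - 3) - 3 * k with hmdef
      have hin : ∀ r ∈ Finset.range (k + 1),
          (k.choose r : ℤ) * F (n - 3 * k) (t - 3 * r)
          = (k.choose r : ℤ) * (F m (t - 3 * r) + 3 * F m (t - 3 * r - 1)
              + 3 * F m (t - 3 * r - 2) + F m (t - 3 * r - 3)) := by
        intro r _
        rw [hm3, F_three]
      rw [Finset.sum_congr rfl hin]
      have hin2 : ∀ r ∈ Finset.range (k + 1),
          (k.choose r : ℤ) * (F m (t - 3 * r) + F m (t - 3 * ((r + 1 : ℕ) : ℤ)))
          = (k.choose r : ℤ) * (F m (t - 3 * r) + F m (t - 3 * r - 3)) := by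
        intro r _
        have : t - 3 * ((r + 1 : ℕ) : ℤ) = t - 3 * r - 3 := by push_cast; ring
        rw [this]
      rw [Finset.sum_congr rfl hin2]
      have hin3 : ∀ r ∈ Finset.range (k + 1),
          (k.choose r : ℤ) * F m ((t - 1) - 3 * r) = (k.choose r : ℤ) * F m (t - 3 * r - 1) := by
        intro r _
        rw [show (t - 1) - 3 * (r : ℤ) = t - 3 * r - 1 from by ring]
      have hin4 : ∀ r ∈ Finset.range (k + 1),
          (k.choose r : ℤ) * F m ((t - 2) - 3 * r) = (k.choose r : ℤ) * F m (t - 3 * r - 2) := by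
        intro r _
        rw [show (t - 2) - 3 * (r : ℤ) = t - 3 * r - 2 from by ring]
      rw [Finset.sum_congr rfl hin3, Finset.sum_congr rfl hin4,
        sum_split (Finset.range (k + 1)) (fun r => (k.choose r : ℤ))
          (fun r => F m (t - 3 * r)) (fun r => F m (t - 3 * r - 1))
          (fun r => F m (t - 3 * r - 2)) (fun r => F m (t - 3 * r - 3)), pow_succ]
      ring
    rw [houter, Finset.sum_congr rfl hterm]
    have hsplit : ∑ k ∈ Finset.range (i + 1),
        (3 * ((-1 : ℤ) ^ k * (i.choose k : ℤ) *
            (∑ r ∈ Finset.range (k + 1), (k.choose r : ℤ) * F ((n - 3) - 3 * k) ((t - 1) - 3 * r))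
          + (-1 : ℤ) ^ k * (i.choose k : ℤ) *
            (∑ r ∈ Finset.range (k + 1), (k.choose r : ℤ) * F ((n - 3) - 3 * k) ((t - 2) - 3 * r))))
        = 3 * (S i (n - 3) (t - 1) + S i (n - 3) (t - 2)) := by
      unfold S
      rw [mul_add, Finset.mul_sum, Finset.mul_sum, ← Finset.sum_add_distrib]
      exact Finset.sum_congr rfl fun k _ => by ring
    rw [hsplit, ih (n - 3) hn3 (t - 1), ih (n - 3) hn3 (t - 2)]
    have e1 : (n - 3) - 2 * i + 1 = n - 2 * (i + 1) := by omega
    have hF := F_succ ((n - 3) - 2 * i) (t - 1 - i)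
    rw [e1] at hF
    rw [show t - 2 - (i : ℤ) = t - 1 - i - 1 from by ring]
    push_cast
    rw [show t - ((i : ℤ) + 1) = t - 1 - i from by ring, hF]
    ring

end Stmt10Aux

/-- For natural numbers `n, i, j` with `i ≤ j` and `n ≥ 3i`:
`Σ_{k=0}^{i} Σ_{r=0}^{k} (−1)^k C(i,k) C(k,r) (C(n−3k, j−3r) − C(n−3k, j−3r−1))
  = 3^i (C(n−2i, j−i) − C(n−2i, j−i−1))`. -/
theorem stmt10 (n i j : ℕ) (hij : i ≤ j) (h : 3 * i ≤ n) :
    ∑ k ∈ Finset.range (i + 1), ∑ r ∈ Finset.range (k + 1),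
        (-1 : ℤ) ^ k * (i.choose k : ℤ) * (k.choose r : ℤ) *
          (ibinom (n - 3 * k) ((j : ℤ) - 3 * (r : ℤ)) -
            ibinom (n - 3 * k) ((j : ℤ) - 3 * (r : ℤ) - 1))
      = 3 ^ i * (ibinom (n - 2 * i) ((j : ℤ) - (i : ℤ)) -
          ibinom (n - 2 * i) ((j : ℤ) - (i : ℤ) - 1)) := by
  have := Stmt10Aux.key i n h (j : ℤ)
  unfold Stmt10Aux.S Stmt10Aux.F at this
  calc ∑ k ∈ Finset.range (i + 1), ∑ r ∈ Finset.range (k + 1),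
        (-1 : ℤ) ^ k * (i.choose k : ℤ) * (k.choose r : ℤ) *
          (ibinom (n - 3 * k) ((j : ℤ) - 3 * (r : ℤ)) -
            ibinom (n - 3 * k) ((j : ℤ) - 3 * (r : ℤ) - 1))
      = ∑ k ∈ Finset.range (i + 1), (-1 : ℤ) ^ k * (i.choose k : ℤ) *
          ∑ r ∈ Finset.range (k + 1), (k.choose r : ℤ) *
            (ibinom (n - 3 * k) ((j : ℤ) - 3 * (r : ℤ)) -
              ibinom (n - 3 * k) ((j : ℤ) - 3 * (r : ℤ) - 1)) := by
        apply Finset.sum_congr rfl; intro k _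
        rw [Finset.mul_sum]
        apply Finset.sum_congr rfl; intro r _
        ring
    _ = 3 ^ i * (ibinom (n - 2 * i) ((j : ℤ) - (i : ℤ)) -
          ibinom (n - 2 * i) ((j : ℤ) - (i : ℤ) - 1)) := this
end

section
/- Let n be a natural number, set a = ⌊n/3⌋ + 1, and assume n ≥ 2a. Define integer square matrices C = (c_{i,j}) and D = (d_{i,j}) of size a+1, with rows and columns indexed by 0 ≤ i, j ≤ a, by: c_{i,j} = (−1)^{i+j} ( C(n−2i, j−i) − C(n−2i, j−i−1) ) for i ≤ j and c_{i,j} = 0 for i > j; and d_{i,j} = C(n−i−j, j−i) for i ≤ j and d_{i,j} = 0 for i > j; where C(a,b) = 0 whenever b < 0 or b > a. Then C is invertible and C⁻¹ = D, i.e. D·C = C·D = I. -/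
open Finset


lemma ibinom_ofNat (a b : ℕ) : ibinom a (b : ℤ) = a.choose b := by
  simp [ibinom]

lemma keyF (c : ℕ) : ∀ N J : ℕ,
    ∑ m ∈ range (J+1), (-1:ℤ)^m * (N.choose m) * ((c + J - m).choose (J - m)) =
      if N ≤ c then ((c - N + J).choose J : ℤ) else (-1)^J * ((N - c - 1).choose J) := by
  intro N
  induction N with
  | zero =>
    intro J
    rw [if_pos (Nat.zero_le c)]
    rw [Finset.sum_eq_single 0]
    · simp
    · intro b _ hb
      rw [Nat.choose_eq_zero_of_lt (Nat.pos_of_ne_zero hb)]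
      simp
    · simp
  | succ N ih =>
    intro J
    cases J with
    | zero => simp
    | succ J =>
      have hrec : ∑ m ∈ range (J+1+1), (-1:ℤ)^m * ((N+1).choose m) * ((c + (J+1) - m).choose ((J+1) - m))
          = (∑ m ∈ range (J+1+1), (-1:ℤ)^m * (N.choose m) * ((c + (J+1) - m).choose ((J+1) - m)))
            - ∑ m ∈ range (J+1), (-1:ℤ)^m * (N.choose m) * ((c + J - m).choose (J - m)) := by
        rw [Finset.sum_range_succ', Finset.sum_range_succ'
          (fun m => (-1:ℤ)^m * (N.choose m) * ((c + (J+1) - m).choose ((J+1) - m))) (J+1)]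
        have hpt : ∀ m ∈ range (J+1),
            (-1:ℤ)^(m+1) * ((N+1).choose (m+1)) * ((c + (J+1) - (m+1)).choose ((J+1) - (m+1)))
            = (-1:ℤ)^(m+1) * (N.choose (m+1)) * ((c + (J+1) - (m+1)).choose ((J+1) - (m+1)))
              - (-1:ℤ)^m * (N.choose m) * ((c + J - m).choose (J - m)) := by
          intro m hm
          have e1 : c + (J+1) - (m+1) = c + J - m := by omega
          have e2 : (J+1) - (m+1) = J - m := by omega
          rw [e1, e2, Nat.choose_succ_succ]
          push_cast
          ring
        rw [Finset.sum_congr rfl hpt, Finset.sum_sub_distrib]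
        simp only [Nat.choose_zero_right]
        ring
      rw [hrec, ih (J+1), ih J]
      by_cases h1 : N + 1 ≤ c
      · have h2 : N ≤ c := by omega
        simp only [if_pos h1, if_pos h2]
        have e1 : c - N + (J+1) = (c - (N+1) + (J+1)) + 1 := by omega
        have e2 : c - N + J = c - (N+1) + (J+1) := by omega
        rw [e1, e2, Nat.choose_succ_succ]
        push_cast
        ring
      · by_cases h2 : N ≤ c
        · have hNc : N = c := by omega
          simp only [if_neg h1, if_pos h2, hNc]
          simp [Nat.choose_self]
        · simp only [if_neg h1, if_neg h2]
          have e1 : N + 1 - c - 1 = (N - c - 1) + 1 := by omega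
          rw [e1, Nat.choose_succ_succ]
          push_cast
          ring
lemma key (n a : ℕ) (hn : 2 * a ≤ n) (i j : ℕ) (hi : i ≤ a) (hj : j ≤ a) :
    ∑ k ∈ range (a+1),
      (if i ≤ k then
        (-1:ℤ) ^ (i + k) * (ibinom (n - 2*i) ((k:ℤ) - (i:ℤ)) - ibinom (n - 2*i) ((k:ℤ) - (i:ℤ) - 1))
      else 0) *
      (if k ≤ j then ibinom (n - k - j) ((j:ℤ) - (k:ℤ)) else 0)
      = if i = j then 1 else 0 := by
  by_cases hij : i ≤ j
  swap
  · rw [if_neg (by omega : ¬ i = j)]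
    apply Finset.sum_eq_zero
    intro k _
    rcases le_or_gt i k with h1 | h1
    · rw [if_neg (by omega : ¬ k ≤ j), mul_zero]
    · rw [if_neg (by omega : ¬ i ≤ k), zero_mul]
  obtain ⟨J, rfl⟩ := Nat.exists_eq_add_of_le hij
  -- restrict the sum to Icc i (i+J)
  rw [← Finset.sum_subset (fun k hk => Finset.mem_range.2 (by
        have := Finset.mem_Icc.1 hk; omega) : Finset.Icc i (i+J) ⊆ range (a+1))
      (by
        intro k _ hk
        rw [Finset.mem_Icc] at hk
        rcases le_or_gt i k with h1 | h1
        · rw [if_neg (by omega : ¬ k ≤ i + J), mul_zero]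
        · rw [if_neg (by omega : ¬ i ≤ k), zero_mul])]
  rw [← Finset.Ico_add_one_right_eq_Icc, Finset.sum_Ico_eq_sum_range]
  rw [show i + J + 1 - i = J + 1 from by omega]
  have hterm : ∀ m ∈ range (J+1),
      (if i ≤ i + m then
        (-1:ℤ) ^ (i + (i+m)) * (ibinom (n - 2*i) (((i+m:ℕ):ℤ) - (i:ℤ))
          - ibinom (n - 2*i) (((i+m:ℕ):ℤ) - (i:ℤ) - 1))
      else 0) *
      (if i + m ≤ i + J then ibinom (n - (i+m) - (i+J)) (((i+J:ℕ):ℤ) - ((i+m:ℕ):ℤ)) else 0)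
      = (-1:ℤ)^m * ((n-2*i).choose m) * ((((n - 2*(i+J)) + J - m)).choose (J - m))
        - (-1:ℤ)^m * (ibinom (n - 2*i) ((m:ℤ) - 1)) * ((((n - 2*(i+J)) + J - m)).choose (J - m)) := by
    intro m hm
    rw [Finset.mem_range] at hm
    rw [if_pos (by omega : i ≤ i + m), if_pos (by omega : i + m ≤ i + J)]
    have e0 : (-1:ℤ)^(i + (i+m)) = (-1)^m := by
      rw [show i + (i+m) = 2*i + m from by ring, pow_add, pow_mul]
      norm_num
    have e1 : ((i+m:ℕ):ℤ) - (i:ℤ) = (m:ℤ) := by push_cast; ring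
    have e2 : ((i+J:ℕ):ℤ) - ((i+m:ℕ):ℤ) = ((J - m : ℕ) : ℤ) := by omega
    have e3 : n - (i+m) - (i+J) = (n - 2*(i+J)) + J - m := by omega
    rw [e0, e1, e2, e3, ibinom_ofNat, ibinom_ofNat]
    ring
  rw [Finset.sum_congr rfl hterm, Finset.sum_sub_distrib, keyF]
  have hsecond : ∑ m ∈ range (J+1),
      (-1:ℤ)^m * (ibinom (n - 2*i) ((m:ℤ) - 1)) * ((((n - 2*(i+J)) + J - m)).choose (J - m))
      = if i = i + J then 0 else (-(-1:ℤ)^J) * (((n-2*i) - (n-2*(i+J)) - 1).choose (J-1)) * (-1) := by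
    rw [Finset.sum_range_succ']
    have h0 : ((-1:ℤ)^0 * (ibinom (n - 2*i) (((0:ℕ):ℤ) - 1)) * ((((n - 2*(i+J)) + J - 0)).choose (J - 0))) = 0 := by
      norm_num [ibinom]
    rw [h0, add_zero]
    cases J with
    | zero => simp
    | succ J' =>
      rw [if_neg (by omega : ¬ i = i + (J'+1))]
      have hpt : ∀ m ∈ range (J'+1),
          (-1:ℤ)^(m+1) * (ibinom (n - 2*i) (((m+1:ℕ):ℤ) - 1)) * ((((n - 2*(i+(J'+1))) + (J'+1) - (m+1))).choose ((J'+1) - (m+1)))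
          = -((-1:ℤ)^m * ((n-2*i).choose m) * ((((n - 2*(i+(J'+1))) + J' - m)).choose (J' - m))) := by
        intro m hm
        rw [Finset.mem_range] at hm
        have e1 : ((m+1:ℕ):ℤ) - 1 = (m:ℤ) := by push_cast; ring
        have e2 : (n - 2*(i+(J'+1))) + (J'+1) - (m+1) = (n - 2*(i+(J'+1))) + J' - m := by omega
        have e3 : (J'+1) - (m+1) = J' - m := by omega
        rw [e1, e2, e3, ibinom_ofNat]
        ring
      rw [Finset.sum_congr rfl hpt, Finset.sum_neg_distrib]
      rw [keyF]
      rw [if_neg (by omega : ¬ (n - 2*i) ≤ (n - 2*(i+(J'+1))))]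
      have e4 : (n - 2*i) - (n - 2*(i+(J'+1))) - 1 = (n-2*i) - (n-2*(i+(J'+1))) - 1 := rfl
      rw [show (J'+1) - 1 = J' from by omega]
      ring
  rw [hsecond]
  by_cases hJ : J = 0
  · subst hJ
    rw [if_pos (by omega : i = i + 0), if_pos (by omega : n - 2*i ≤ n - 2*(i+0)), sub_zero,
      if_pos (show i = i + 0 from by omega)]
    simp
  · rw [if_neg (by omega : ¬ i = i + J), if_neg (by omega : ¬ i = i + J),
      if_neg (by omega : ¬ (n - 2*i) ≤ (n - 2*(i+J)))]
    have e5 : (n - 2*i) - (n - 2*(i+J)) - 1 = 2*J - 1 := by omega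
    rw [e5]
    have e6 : (2*J - 1).choose J = (2*J-1).choose (J-1) := by
      rw [← Nat.choose_symm (by omega : J ≤ 2*J - 1), show 2*J - 1 - J = J - 1 from by omega]
    rw [e6]
    ring

/-- Let `a = ⌊n/3⌋ + 1` with `n ≥ 2a`.  The matrix `C` with entries
`c_{i,j} = (−1)^{i+j}(C(n−2i, j−i) − C(n−2i, j−i−1))` for `i ≤ j` (zero otherwise)
is invertible with inverse the matrix `D` with entries `d_{i,j} = C(n−i−j, j−i)` for
`i ≤ j` (zero otherwise); indices run over `0 ≤ i, j ≤ a`. -/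
theorem stmt12 (n a : ℕ) (ha : a = n / 3 + 1) (hn : 2 * a ≤ n)
    (C D : Matrix (Fin (a + 1)) (Fin (a + 1)) ℤ)
    (hC : ∀ i j : Fin (a + 1), C i j =
      if (i : ℕ) ≤ (j : ℕ) then
        (-1) ^ ((i : ℕ) + (j : ℕ)) *
          (ibinom (n - 2 * (i : ℕ)) (((j : ℕ) : ℤ) - ((i : ℕ) : ℤ)) -
            ibinom (n - 2 * (i : ℕ)) (((j : ℕ) : ℤ) - ((i : ℕ) : ℤ) - 1))
      else 0)
    (hD : ∀ i j : Fin (a + 1), D i j =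
      if (i : ℕ) ≤ (j : ℕ) then
        ibinom (n - (i : ℕ) - (j : ℕ)) (((j : ℕ) : ℤ) - ((i : ℕ) : ℤ))
      else 0) :
    IsUnit C ∧ D * C = 1 ∧ C * D = 1 := by
  have hCD : C * D = 1 := by
    ext i j
    rw [Matrix.mul_apply, Matrix.one_apply]
    simp only [hC, hD]
    rw [Fin.sum_univ_eq_sum_range (fun k : ℕ =>
      (if (i : ℕ) ≤ k then
        (-1:ℤ) ^ ((i : ℕ) + k) *
          (ibinom (n - 2 * (i : ℕ)) ((k : ℤ) - ((i : ℕ) : ℤ)) -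
            ibinom (n - 2 * (i : ℕ)) ((k : ℤ) - ((i : ℕ) : ℤ) - 1))
      else 0) *
      (if k ≤ (j : ℕ) then ibinom (n - k - (j : ℕ)) (((j : ℕ) : ℤ) - (k : ℤ)) else 0)) (a+1)]
    rw [key n a hn (i : ℕ) (j : ℕ) (Nat.lt_succ_iff.mp i.isLt) (Nat.lt_succ_iff.mp j.isLt)]
    by_cases h : i = j
    · rw [if_pos h, if_pos (by exact_mod_cast congrArg Fin.val h)]
    · rw [if_neg h, if_neg (fun hv => h (Fin.ext hv))]
  have hDC : D * C = 1 := mul_eq_one_comm.mp hCD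
  exact ⟨⟨⟨C, D, hCD, hDC⟩, rfl⟩, hDC, hCD⟩
end
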